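/- Let X ⊆ E(M⁺) be a flat of M⁺ with e ∉ X. Then γ_{M⁺}(X) = γ_M(X). -/

import Mathlib

open Set Matroid
open scoped Classical

namespace Paper

variable {α : Type*}

/-- A circuit of a matroid: a minimal dependent set. -/
def Circuit (M : Matroid α) (C : Set α) : Prop :=
  M.Dep C ∧ ∀ D ⊂ C, M.Indep D

/-- A coloop: an element of the ground set lying in no circuit. -/
def Coloop (M : Matroid α) (x : α) : Prop :=
  x ∈ M.E ∧ ∀ C, Circuit M C → x ∉ C

/-- The set of coloops of a matroid. -/
def coloops (M : Matroid α) : Set α := {x | Coloop M x}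

/-- A cyclic set: a subset of the ground set each of whose elements lies in a
circuit contained in the set (equivalently, the restriction has no coloops). -/
def Cyclic (M : Matroid α) (X : Set α) : Prop :=
  X ⊆ M.E ∧ ∀ x ∈ X, ∃ C, Circuit M C ∧ C ⊆ X ∧ x ∈ C

/-- A cyclic flat: a cyclic set that is also a flat. -/
def CyclicFlat (M : Matroid α) (X : Set α) : Prop :=
  Cyclic M X ∧ M.IsFlat X

/-- The rank of a set: the largest cardinality of an independent subset. -/
noncomputable def rk (M : Matroid α) (X : Set α) : ℕ :=
  sSup (Set.ncard '' {I | M.Indep I ∧ I ⊆ X})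

/-- The nullity of a set: `n(X) = |X| − r(X)`. -/
noncomputable def nullity (M : Matroid α) (X : Set α) : ℤ :=
  (X.ncard : ℤ) - rk M X

/-- Deletion of a single element: `M \ e`. -/
noncomputable def deleteElem (M : Matroid α) (e : α) : Matroid α :=
  M ↾ (M.E \ {e})


lemma rk_restrict_eq (M : Matroid α) {R Z : Set α} (hZ : Z ⊆ R) :
    rk (M ↾ R) Z = rk M Z := by
  unfold rk
  congr 1
  ext n
  simp only [Set.mem_image, Set.mem_setOf_eq, Matroid.restrict_indep_iff]
  constructor
  · rintro ⟨I, ⟨⟨hI, -⟩, hIZ⟩, rfl⟩; exact ⟨I, ⟨hI, hIZ⟩, rfl⟩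
  · rintro ⟨I, ⟨hI, hIZ⟩, rfl⟩; exact ⟨I, ⟨⟨hI, hIZ.trans hZ⟩, hIZ⟩, rfl⟩

lemma nullity_restrict_eq (M : Matroid α) {R Z : Set α} (hZ : Z ⊆ R) :
    nullity (M ↾ R) Z = nullity M Z := by
  unfold nullity; rw [rk_restrict_eq M hZ]

lemma circuit_restrict_iff (M : Matroid α) {R C : Set α} (hR : R ⊆ M.E) (hC : C ⊆ R) :
    Circuit (M ↾ R) C ↔ Circuit M C := by
  unfold Circuit
  rw [Matroid.restrict_dep_iff, Matroid.dep_iff]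
  constructor
  · rintro ⟨⟨h1, -⟩, h2⟩
    exact ⟨⟨h1, hC.trans hR⟩, fun D hD ↦ ((Matroid.restrict_indep_iff).mp (h2 D hD)).1⟩
  · rintro ⟨⟨h1, -⟩, h2⟩
    exact ⟨⟨h1, hC⟩, fun D hD ↦
      (Matroid.restrict_indep_iff).mpr ⟨h2 D hD, hD.subset.trans hC⟩⟩

lemma cyclic_restrict_iff (M : Matroid α) {R Z : Set α} (hR : R ⊆ M.E) (hZ : Z ⊆ R) :
    Cyclic (M ↾ R) Z ↔ Cyclic M Z := by
  unfold Cyclic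
  rw [Matroid.restrict_ground_eq]
  constructor
  · rintro ⟨-, h⟩
    refine ⟨hZ.trans hR, fun x hx ↦ ?_⟩
    obtain ⟨C, hC, hCZ, hxC⟩ := h x hx
    exact ⟨C, (circuit_restrict_iff M hR (hCZ.trans hZ)).mp hC, hCZ, hxC⟩
  · rintro ⟨-, h⟩
    refine ⟨hZ, fun x hx ↦ ?_⟩
    obtain ⟨C, hC, hCZ, hxC⟩ := h x hx
    exact ⟨C, (circuit_restrict_iff M hR (hCZ.trans hZ)).mpr hC, hCZ, hxC⟩

lemma flat_restrict_iff (M : Matroid α) {R X Z : Set α} (hR : R ⊆ M.E)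
    (hX : M.IsFlat X) (hXR : X ⊆ R) (hZ : Z ⊆ X) :
    (M ↾ R).IsFlat Z ↔ M.IsFlat Z := by
  constructor
  · intro hF
    refine ⟨fun I Y hIZ hIY ↦ ?_, (hZ.trans hXR).trans hR⟩
    have hYX : Y ⊆ X := by
      refine (hIY.subset_closure).trans ?_
      calc M.closure I ⊆ M.closure X := M.closure_subset_closure (hIZ.subset.trans hZ)
        _ = X := hX.closure
    have hIZ' : (M ↾ R).IsBasis I Z :=
      (M.isBasis_restrict_iff hR).mpr ⟨hIZ, hZ.trans hXR⟩
    have hIY' : (M ↾ R).IsBasis I Y :=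
      (M.isBasis_restrict_iff hR).mpr ⟨hIY, hYX.trans hXR⟩
    exact hF.1 hIZ' hIY'
  · intro hF
    refine ⟨fun I Y hIZ hIY ↦ ?_, hZ.trans hXR⟩
    rw [M.isBasis_restrict_iff hR] at hIZ hIY
    exact hF.1 hIZ.1 hIY.1

lemma cyclicFlat_deleteElem_iff (M : Matroid α) {e : α} {X Z : Set α}
    (hX : M.IsFlat X) (heX : e ∉ X) (hZ : Z ⊆ X) :
    CyclicFlat (deleteElem M e) Z ↔ CyclicFlat M Z := by
  have hR : M.E \ {e} ⊆ M.E := Set.diff_subset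
  have hXR : X ⊆ M.E \ {e} :=
    Set.subset_diff_singleton hX.subset_ground heX
  unfold CyclicFlat deleteElem
  rw [cyclic_restrict_iff M hR (hZ.trans hXR), flat_restrict_iff M hR hX hXR hZ]

variable [Fintype α] [DecidableEq α]

/-- The `γ` function: `γ_M(X) = n(X) − Σ_{Z ∈ Z(M), Z ⊊ X} γ_M(Z)`. -/
noncomputable def gamma (M : Matroid α) (X : Finset α) : ℤ :=
  nullity M ↑X -
    ∑ Z ∈ (Finset.univ.filter (fun Z : Finset α => CyclicFlat M ↑Z ∧ Z ⊂ X)).attach,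
      gamma M Z.1
termination_by X.card
decreasing_by
  exact Finset.card_lt_card (Finset.mem_filter.mp Z.2).2.2

theorem statement_12 (M : Matroid α) (e : α) (he : e ∈ M.E)
    (X : Finset α) (hflat : M.IsFlat ↑X) (heX : e ∉ X) :
    gamma M X = gamma (deleteElem M e) X := by
  revert hflat heX
  induction X using Finset.strongInduction with
  | _ X ih =>
    intro hflat heX
    have heX' : e ∉ (↑X : Set α) := by simpa using heX
    have hXE : (↑X : Set α) ⊆ M.E \ {e} :=
      Set.subset_diff_singleton hflat.subset_ground heX'
    rw [gamma, gamma]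
    have hset : (Finset.univ.filter (fun Z : Finset α => CyclicFlat M ↑Z ∧ Z ⊂ X)) =
        (Finset.univ.filter (fun Z : Finset α => CyclicFlat (deleteElem M e) ↑Z ∧ Z ⊂ X)) := by
      ext Z
      simp only [Finset.mem_filter, Finset.mem_univ, true_and]
      constructor
      · rintro ⟨h1, h2⟩
        exact ⟨(cyclicFlat_deleteElem_iff M hflat heX'
          (Finset.coe_subset.mpr h2.subset)).mpr h1, h2⟩
      · rintro ⟨h1, h2⟩
        exact ⟨(cyclicFlat_deleteElem_iff M hflat heX'
          (Finset.coe_subset.mpr h2.subset)).mp h1, h2⟩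
    congr 1
    · rw [deleteElem, nullity_restrict_eq M hXE]
    rw [Finset.sum_attach _ (gamma M), Finset.sum_attach _ (gamma (deleteElem M e)), ← hset]
    refine Finset.sum_congr rfl fun Z hZ ↦ ?_
    obtain ⟨hcf, hZX⟩ := (Finset.mem_filter.mp hZ).2
    exact ih Z hZX hcf.2 (fun h ↦ heX (hZX.subset h))

end Paper
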